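/- Let Γ be a connected negative definite plumbing tree with intersection form I, canonical class K, weight function w(k) = -(k² + |V|)/8 on Char, and cube weights w((k,I')) = max_{J⊂I'} w(k + 2Σ_{j∈J} E_j). Then the identity of formal power series holds: Π_{v∈V} (1 - t^{E_v^*})^{δ_v - 2} = Σ_{k ∈ Char} Σ_{I' ⊂ V} (-1)^{|I'|+1} w((k, I')) · t^{(k-K)/2}, where δ_v is the valency of v in Γ and t^{l'} denotes the multivariable monomial with exponent l' ∈ L'. -/

import Mathlib

open scoped BigOperators Matrix

def intMatQ {s : ℕ} (M : Matrix (Fin s) (Fin s) ℤ) : Matrix (Fin s) (Fin s) ℚ :=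
  M.map fun m => (m : ℚ)

/-- The bilinear pairing `(x, y) = xᵀ M y` over `ℚ`. -/
def pairing {s : ℕ} (M : Matrix (Fin s) (Fin s) ℤ) (x y : Fin s → ℚ) : ℚ :=
  x ⬝ᵥ (intMatQ M).mulVec y

def NegDefinite {s : ℕ} (M : Matrix (Fin s) (Fin s) ℤ) : Prop :=
  ∀ x : Fin s → ℚ, x ≠ 0 → pairing M x x < 0

def baseE {s : ℕ} (v : Fin s) : Fin s → ℚ := Pi.single v 1

/-- `Estar v` is the antidual basis: `(E_v^*, E_w) = -δ_{vw}`. -/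
def IsAntidual {s : ℕ} (M : Matrix (Fin s) (Fin s) ℤ) (Estar : Fin s → Fin s → ℚ) : Prop :=
  ∀ v w, pairing M (Estar v) (baseE w) = if v = w then -1 else 0

def IsPlumbing {s : ℕ} (M : Matrix (Fin s) (Fin s) ℤ) : Prop :=
  M.IsSymm ∧ NegDefinite M ∧ (∀ v w, v ≠ w → M v w = 0 ∨ M v w = 1) ∧
    (SimpleGraph.fromRel fun v w => M v w = 1).Connected

/-- valency of a vertex -/
def valency {s : ℕ} (M : Matrix (Fin s) (Fin s) ℤ) (v : Fin s) : ℕ :=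
  (Finset.univ.filter fun w => w ≠ v ∧ M v w = 1).card

def IsPlumbingTree {s : ℕ} (M : Matrix (Fin s) (Fin s) ℤ) : Prop :=
  IsPlumbing M ∧ ∑ v, valency M v = 2 * (s - 1)

/-- characteristic element -/
def IsChar {s : ℕ} (M : Matrix (Fin s) (Fin s) ℤ) (k : Fin s → ℚ) : Prop :=
  (∀ v, ∃ m : ℤ, pairing M k (baseE v) = m) ∧
  ∀ l : Fin s → ℤ, ∃ m : ℤ, pairing M (k + fun v => (l v : ℚ)) (fun v => (l v : ℚ)) = 2 * m

/-- canonical class by adjunction -/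
def IsCanonical {s : ℕ} (M : Matrix (Fin s) (Fin s) ℤ) (K : Fin s → ℚ) : Prop :=
  ∀ v, pairing M (K + baseE v) (baseE v) = -2

/-- the weight function w(k) = -(k² + s)/8 -/
def wfun {s : ℕ} (M : Matrix (Fin s) (Fin s) ℤ) (k : Fin s → ℚ) : ℚ :=
  -(pairing M k k + s) / 8

/-- the weight of the cube (k, I'). -/
def cubeW {s : ℕ} (M : Matrix (Fin s) (Fin s) ℤ) (k : Fin s → ℚ) (I' : Finset (Fin s)) : ℚ :=
  I'.powerset.sup' (Finset.powerset_nonempty I') fun J => wfun M (k + 2 • ∑ j ∈ J, baseE j)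

/-- Σ_{I'⊂V} (-1)^{|I'|+1} w((k,I')) -/
def cubeSum {s : ℕ} (M : Matrix (Fin s) (Fin s) ℤ) (k : Fin s → ℚ) : ℚ :=
  ∑ I' ∈ Finset.univ.powerset, (-1 : ℚ) ^ (I'.card + 1) * cubeW M k I'


set_option linter.unusedSectionVars false

namespace ZetaAux
open Finset

/-- coefficient of x^n in (1-x)^{d-2}, as function of d and integer n (0 for n<0). -/
def cc (d : ℕ) (n : ℤ) : ℚ :=
  if n < 0 then 0
  else ∑ j ∈ Finset.range (n.toNat + 1), (-1 : ℚ) ^ j * (d.choose j) * ((n : ℚ) + 1 - j)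

lemma cc_neg {d : ℕ} {n : ℤ} (h : n < 0) : cc d n = 0 := by simp [cc, h]

lemma cc_zero {n : ℤ} (h : 0 ≤ n) : cc 0 n = (n : ℚ) + 1 := by
  rw [cc, if_neg (not_lt.2 h)]
  rw [Finset.sum_eq_single 0]
  · simp
  · intro j hj hj0
    rcases Nat.exists_eq_succ_of_ne_zero hj0 with ⟨i, rfl⟩
    simp [Nat.choose]
  · simp

lemma cc_succ (d : ℕ) (n : ℤ) : cc (d + 1) n = cc d n - cc d (n - 1) := by
  rcases lt_or_ge n 0 with h | h
  · rw [cc_neg h, cc_neg h, cc_neg (by omega), sub_zero]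
  rcases eq_or_lt_of_le h with h0 | h1
  · have h0' : n = 0 := h0.symm
    subst h0'
    rw [cc_neg (show (0:ℤ)-1<0 by norm_num), sub_zero]
    simp [cc]
  · -- n ≥ 1
    have hn1 : (0:ℤ) ≤ n - 1 := by omega
    obtain ⟨m, hm⟩ : ∃ m : ℕ, n.toNat = m + 1 := ⟨(n-1).toNat, by omega⟩
    have hm' : (n - 1).toNat = m := by omega
    rw [cc, cc, cc, if_neg (not_lt.2 h), if_neg (not_lt.2 h), if_neg (not_lt.2 hn1), hm, hm']
    have key : ∀ j, ((-1:ℚ)^j * ((d+1).choose j) * ((n:ℚ) + 1 - j))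
        = (-1:ℚ)^j * (d.choose j) * ((n:ℚ) + 1 - j)
          + (-1:ℚ)^j * (if j = 0 then (0:ℚ) else (d.choose (j-1))) * ((n:ℚ) + 1 - j) := by
      intro j
      rcases j with _ | i
      · simp
      · rw [if_neg (Nat.succ_ne_zero i)]
        have : ((d+1).choose (i+1) : ℚ) = (d.choose (i+1) : ℚ) + (d.choose i : ℚ) := by
          rw [Nat.choose_succ_succ']
          push_cast
          ring
        simp only [Nat.succ_sub_one]
        rw [this]; ring
    rw [Finset.sum_congr rfl (fun j _ => key j), Finset.sum_add_distrib]
    have step : ∑ j ∈ Finset.range (m + 1 + 1),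
        (-1:ℚ)^j * (if j = 0 then (0:ℚ) else (d.choose (j-1))) * ((n:ℚ) + 1 - j)
        = - ∑ j ∈ Finset.range (m + 1), (-1:ℚ)^j * (d.choose j) * (((n - 1 : ℤ) : ℚ) + 1 - j) := by
      rw [Finset.sum_range_succ' (fun j => (-1:ℚ)^j * (if j = 0 then (0:ℚ) else (d.choose (j-1))) * ((n:ℚ) + 1 - j)) (m+1)]
      have e0 : (-1:ℚ)^0 * (if 0 = 0 then (0:ℚ) else (d.choose (0-1))) * ((n:ℚ) + 1 - (0:ℕ)) = 0 := by simp
      rw [e0, add_zero, ← Finset.sum_neg_distrib]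
      refine Finset.sum_congr rfl ?_
      intro i _
      rw [if_neg (Nat.succ_ne_zero i)]
      simp only [Nat.succ_sub_one]
      push_cast
      ring
    rw [step]
    ring
lemma cc_one {n : ℤ} (h : 0 ≤ n) : cc 1 n = 1 := by
  rw [show (1:ℕ) = 0 + 1 from rfl, cc_succ]
  rcases eq_or_lt_of_le h with h0 | h1
  · have h0' : n = 0 := h0.symm
    subst h0'
    rw [cc_zero le_rfl, cc_neg (show (0:ℤ)-1<0 by norm_num)]
    norm_num
  · rw [cc_zero h, cc_zero (by omega)]
    push_cast; ring

lemma cc_two (n : ℤ) : cc 2 n = if n = 0 then 1 else 0 := by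
  rw [show (2:ℕ) = 1 + 1 from rfl, cc_succ]
  rcases lt_or_ge n 0 with h | h
  · rw [cc_neg h, cc_neg (by omega), if_neg (by omega)]; ring
  rcases eq_or_lt_of_le h with h0 | h1
  · have h0' : n = 0 := h0.symm
    subst h0'
    rw [if_pos rfl, cc_one le_rfl, cc_neg (show (0:ℤ)-1<0 by norm_num)]
    norm_num
  · rw [cc_one h, cc_one (by omega), if_neg (by omega)]; ring

variable {V : Type*} [DecidableEq V]

section Graph
variable (adj : V → V → Prop) [DecidableRel adj]

def deg (U : Finset V) (v : V) : ℕ := (U.filter fun w => adj v w).card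

def dd (J : Finset V) : ℚ := ∑ v ∈ J, ∑ w ∈ J, if adj v w then (1:ℚ) else 0

def ff (a : V → ℤ) (J : Finset V) : ℚ :=
  (J.card : ℚ) + (∑ v ∈ J, (a v : ℚ)) - dd adj J / 2

def MM (a : V → ℤ) (I : Finset V) : ℚ :=
  I.powerset.sup' (Finset.powerset_nonempty I) (ff adj a)

def SS (a : V → ℤ) (U : Finset V) : ℚ :=
  ∑ I ∈ U.powerset, (-1:ℚ)^(I.card+1) * MM adj a I

inductive ReachIn (U : Finset V) : V → V → Prop
  | refl {x} (hx : x ∈ U) : ReachIn U x x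
  | tail {x y z} (p : ReachIn U x y) (h : adj y z) (hz : z ∈ U) : ReachIn U x z

def Conn (U : Finset V) : Prop := ∀ x ∈ U, ∀ y ∈ U, ReachIn adj U x y

variable {adj}

lemma sum_pow_neg_one_q {β : Type*} {x : Finset β} (h : x.Nonempty) :
    ∑ m ∈ x.powerset, (-1:ℚ)^m.card = 0 := by
  exact_mod_cast congrArg (Int.cast : ℤ → ℚ)
    (Finset.sum_powerset_neg_one_pow_card_of_nonempty h)

lemma ff_empty (a : V → ℤ) : ff adj a ∅ = 0 := by simp [ff, dd]

lemma reach_mem_right {U : Finset V} {x y : V} (h : ReachIn adj U x y) : y ∈ U := by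
  induction h with
  | refl hx => exact hx
  | tail p h hz ih => exact hz

lemma reach_head {U : Finset V} {x y z : V} (hxy : adj x y) (hx : x ∈ U)
    (h : ReachIn adj U y z) : ReachIn adj U x z := by
  induction h with
  | refl hy => exact ReachIn.tail (ReachIn.refl hx) hxy hy
  | tail p h hz ih => exact ReachIn.tail ih h hz

lemma reach_exists_adj (hirr : ∀ v, ¬ adj v v) {U : Finset V} {x y : V}
    (h : ReachIn adj U x y) : x = y ∨ ∃ w ∈ U, w ≠ x ∧ adj x w := by
  induction h with
  | refl hx => exact Or.inl rfl
  | @tail y z p h hz ih =>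
    rcases ih with rfl | hw
    · right
      refine ⟨z, hz, ?_, h⟩
      rintro rfl
      exact hirr _ h
    · exact Or.inr hw

section Leaf
variable (hsym : ∀ v w, adj v w → adj w v) (hirr : ∀ v, ¬ adj v v)
variable {U : Finset V} {v₀ u : V}
variable (huv : adj v₀ u)
variable (huniq : ∀ w ∈ U, adj v₀ w → w = u)

include hsym hirr huv huniq

lemma reach_avoid {x y : V} (h : ReachIn adj U x y) (hx : x ∈ U.erase v₀) :
    ReachIn adj (U.erase v₀) x (if y = v₀ then u else y) := by
  have hne : u ≠ v₀ := fun he => hirr v₀ (by rw [he] at huv; exact huv)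
  induction h with
  | refl hxx =>
    rw [if_neg (Finset.ne_of_mem_erase hx)]
    exact ReachIn.refl hx
  | @tail y z p h hz ih =>
    by_cases hzv : z = v₀
    · subst hzv
      have hyu : y = u := huniq y (reach_mem_right p) (hsym _ _ h)
      rw [if_pos rfl]
      rw [hyu] at ih
      rwa [if_neg hne] at ih
    · rw [if_neg hzv]
      by_cases hyv : y = v₀
      · subst hyv
        have hzu : z = u := huniq z hz h
        rw [if_pos rfl] at ih
        rw [hzu]
        exact ih
      · rw [if_neg hyv] at ih
        exact ReachIn.tail ih h (Finset.mem_erase.2 ⟨hzv, hz⟩)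

lemma conn_erase (hconn : Conn adj U) : Conn adj (U.erase v₀) := by
  intro x hx y hy
  have h2 := reach_avoid hsym hirr huv huniq
    (hconn x (Finset.mem_of_mem_erase hx) y (Finset.mem_of_mem_erase hy)) hx
  rwa [if_neg (Finset.ne_of_mem_erase hy)] at h2

lemma dd_insert {J : Finset V} (hJ : J ⊆ U.erase v₀) :
    dd adj (insert v₀ J) = dd adj J + (if u ∈ J then 2 else 0) := by
  have hv₀J : v₀ ∉ J := fun h => (Finset.mem_erase.1 (hJ h)).1 rfl
  have hJU : ∀ w ∈ J, w ∈ U := fun w hw => Finset.mem_of_mem_erase (hJ hw)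
  have row : ∑ w ∈ J, (if adj v₀ w then (1:ℚ) else 0) = (if u ∈ J then 1 else 0) := by
    rw [show (∑ w ∈ J, (if adj v₀ w then (1:ℚ) else 0))
        = ∑ w ∈ J, (if w = u then (1:ℚ) else 0) from
      Finset.sum_congr rfl (fun w hw => by
        by_cases h : adj v₀ w
        · rw [if_pos h, if_pos (huniq w (hJU w hw) h)]
        · rw [if_neg h, if_neg (fun he => h (by rw [he]; exact huv))])]
    exact Finset.sum_ite_eq' J u (fun _ => (1:ℚ))
  have col : ∀ v ∈ J, (if adj v v₀ then (1:ℚ) else 0) = (if v = u then (1:ℚ) else 0) := by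
    intro v hv
    by_cases h : adj v v₀
    · rw [if_pos h, if_pos (huniq v (hJU v hv) (hsym _ _ h))]
    · rw [if_neg h, if_neg (fun he => h (by rw [he]; exact hsym _ _ huv))]
  rw [dd, Finset.sum_insert hv₀J]
  rw [Finset.sum_insert hv₀J, if_neg (hirr v₀), row]
  have key : ∀ v ∈ J, ∑ w ∈ insert v₀ J, (if adj v w then (1:ℚ) else 0)
      = (if v = u then (1:ℚ) else 0) + ∑ w ∈ J, (if adj v w then (1:ℚ) else 0) := by
    intro v hv
    rw [Finset.sum_insert hv₀J, col v hv]
  rw [Finset.sum_congr rfl key, Finset.sum_add_distrib,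
    Finset.sum_ite_eq' J u (fun _ => (1:ℚ))]
  rw [show dd adj J = ∑ v ∈ J, ∑ w ∈ J, (if adj v w then (1:ℚ) else 0) from rfl]
  by_cases h : u ∈ J
  · simp [h]; ring
  · simp [h]

omit hsym hirr huv huniq in
lemma ff_update (a : V → ℤ) (J : Finset V) :
    ff adj (Function.update a u (a u - 1)) J = ff adj a J - (if u ∈ J then 1 else 0) := by
  have key : ∀ v ∈ J, ((Function.update a u (a u - 1) v : ℤ) : ℚ)
      = (a v : ℚ) + (if v = u then (-1:ℚ) else 0) := by
    intro v _
    by_cases h : v = u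
    · subst h; rw [Function.update_self, if_pos rfl]; push_cast; ring
    · rw [Function.update_of_ne h, if_neg h]; ring
  rw [ff, ff, Finset.sum_congr rfl key, Finset.sum_add_distrib,
    Finset.sum_ite_eq' J u (fun _ => (-1:ℚ))]
  by_cases h : u ∈ J
  · simp [h]; ring
  · simp [h]

lemma ff_insert (a : V → ℤ) {J : Finset V} (hJ : J ⊆ U.erase v₀) :
    ff adj a (insert v₀ J)
      = ff adj (Function.update a u (a u - 1)) J + (1 + (a v₀ : ℚ)) := by
  have hv₀J : v₀ ∉ J := fun h => (Finset.mem_erase.1 (hJ h)).1 rfl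
  rw [ff_update (u := u), ff, ff, Finset.card_insert_of_notMem hv₀J,
    Finset.sum_insert hv₀J, dd_insert hsym hirr huv huniq hJ]
  by_cases h : u ∈ J
  · simp [h]; push_cast; ring
  · simp [h]; push_cast; ring


omit hsym hirr huv huniq in
lemma sup'_add_const {β : Type*} {s : Finset β} (h : s.Nonempty) (f : β → ℚ) (c : ℚ) :
    s.sup' h (fun x => f x + c) = s.sup' h f + c := by
  apply le_antisymm
  · exact Finset.sup'_le _ _ fun b hb => add_le_add (Finset.le_sup' f hb) (le_refl c)
  · obtain ⟨b, hb, hb'⟩ := Finset.exists_mem_eq_sup' h f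
    rw [hb']
    exact Finset.le_sup' (fun x => f x + c) hb

omit hsym hirr huv huniq in
lemma MM_nonneg (a : V → ℤ) (I : Finset V) : 0 ≤ MM adj a I := by
  have h0 : ff adj a ∅ ≤ MM adj a I := Finset.le_sup' _ (Finset.empty_mem_powerset I)
  rwa [ff_empty] at h0

omit hsym hirr huv huniq in
lemma MM_le_MM (a b : V → ℤ) (c : ℚ) (I : Finset V)
    (h : ∀ J ∈ I.powerset, ff adj a J ≤ ff adj b J + c) :
    MM adj a I ≤ MM adj b I + c := by
  apply Finset.sup'_le
  intro J hJ
  exact le_trans (h J hJ) (add_le_add (Finset.le_sup' _ hJ) (le_refl c))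

lemma MM_insert (a : V → ℤ) {I : Finset V} (hI : I ⊆ U.erase v₀) :
    MM adj a (insert v₀ I)
      = (MM adj a I) ⊔ (MM adj (Function.update a u (a u - 1)) I + (1 + (a v₀ : ℚ))) := by
  have hv₀I : v₀ ∉ I := fun h => (Finset.mem_erase.1 (hI h)).1 rfl
  rw [MM]
  have hps : (insert v₀ I).powerset = I.powerset ∪ I.powerset.image (insert v₀) :=
    Finset.powerset_insert I v₀
  have h1 : I.powerset.Nonempty := Finset.powerset_nonempty I
  have h2 : (I.powerset.image (insert v₀)).Nonempty := h1.image _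
  rw [Finset.sup'_congr (Finset.powerset_nonempty (insert v₀ I)) hps (fun _ _ => rfl)]
  rw [Finset.sup'_union h1 h2 (ff adj a), Finset.sup'_image h2 (ff adj a)]
  congr 1
  rw [show ((ff adj a) ∘ (insert v₀) : Finset V → ℚ) = fun J => ff adj a (insert v₀ J) from rfl]
  rw [Finset.sup'_congr h1 rfl (fun J hJ => ff_insert hsym hirr huv huniq a
      (le_trans (Finset.mem_powerset.1 hJ) hI))]
  exact sup'_add_const h1 _ _

lemma MM_insert_of_nonneg (a : V → ℤ) {I : Finset V} (hI : I ⊆ U.erase v₀)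
    (ha : 0 ≤ a v₀) :
    MM adj a (insert v₀ I)
      = MM adj (Function.update a u (a u - 1)) I + (1 + (a v₀ : ℚ)) := by
  rw [MM_insert hsym hirr huv huniq a hI]
  apply sup_eq_right.2
  have h1 : MM adj a I ≤ MM adj (Function.update a u (a u - 1)) I + 1 := by
    apply MM_le_MM
    intro J hJ
    rw [ff_update (u := u)]
    by_cases h : u ∈ J
    · simp [h]
    · simp [h]
  have h2 : (0:ℚ) ≤ (a v₀ : ℚ) := by exact_mod_cast ha
  linarith

lemma MM_insert_of_neg (a : V → ℤ) {I : Finset V} (hI : I ⊆ U.erase v₀)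
    (ha : a v₀ < 0) :
    MM adj a (insert v₀ I) = MM adj a I := by
  rw [MM_insert hsym hirr huv huniq a hI]
  apply sup_eq_left.2
  have h1 : MM adj (Function.update a u (a u - 1)) I ≤ MM adj a I + 0 := by
    apply MM_le_MM
    intro J hJ
    rw [ff_update (u := u)]
    by_cases h : u ∈ J
    · simp [h]
    · simp [h]
  have h2 : (a v₀ : ℚ) ≤ -1 := by exact_mod_cast (by omega : a v₀ ≤ -1)
  linarith

lemma SS_erase (a : V → ℤ) (hv₀ : v₀ ∈ U) (hU' : (U.erase v₀).Nonempty) :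
    SS adj a U = (if 0 ≤ a v₀ then
      SS adj a (U.erase v₀) - SS adj (Function.update a u (a u - 1)) (U.erase v₀)
      else 0) := by
  rw [SS, show U.powerset = (insert v₀ (U.erase v₀)).powerset from by
    rw [Finset.insert_erase hv₀], Finset.sum_powerset_insert (Finset.notMem_erase v₀ U)]
  have hsub : ∀ I ∈ (U.erase v₀).powerset, I ⊆ U.erase v₀ := fun I hI =>
    Finset.mem_powerset.1 hI
  have hcard : ∀ I ∈ (U.erase v₀).powerset,
      (insert v₀ I).card = I.card + 1 := by
    intro I hI
    exact Finset.card_insert_of_notMem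
      (fun h => (Finset.mem_erase.1 (hsub I hI h)).1 rfl)
  rcases le_or_gt 0 (a v₀) with ha | ha
  · rw [if_pos ha]
    have key : ∀ I ∈ (U.erase v₀).powerset,
        (-1:ℚ)^((insert v₀ I).card+1) * MM adj a (insert v₀ I)
        = (-1:ℚ)^(I.card) * (1 + (a v₀:ℚ))
          - (-1:ℚ)^(I.card+1) * MM adj (Function.update a u (a u - 1)) I := by
      intro I hI
      rw [hcard I hI, MM_insert_of_nonneg hsym hirr huv huniq a (hsub I hI) ha]
      ring
    rw [Finset.sum_congr rfl key, Finset.sum_sub_distrib]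
    rw [← Finset.sum_mul, sum_pow_neg_one_q hU', zero_mul]
    rw [show (∑ I ∈ (U.erase v₀).powerset, (-1:ℚ)^(I.card+1) * MM adj a I)
        = SS adj a (U.erase v₀) from rfl]
    rw [show (∑ I ∈ (U.erase v₀).powerset,
        (-1:ℚ)^(I.card+1) * MM adj (Function.update a u (a u - 1)) I)
        = SS adj (Function.update a u (a u - 1)) (U.erase v₀) from rfl]
    ring
  · rw [if_neg (not_le.2 ha)]
    have key : ∀ I ∈ (U.erase v₀).powerset,
        (-1:ℚ)^((insert v₀ I).card+1) * MM adj a (insert v₀ I)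
        = - ((-1:ℚ)^(I.card+1) * MM adj a I) := by
      intro I hI
      rw [hcard I hI, MM_insert_of_neg hsym hirr huv huniq a (hsub I hI) ha]
      ring
    rw [Finset.sum_congr rfl key, Finset.sum_neg_distrib]
    ring


lemma deg_erase (hv₀ : v₀ ∈ U) {v : V} (hv : v ∈ U.erase v₀) :
    deg adj (U.erase v₀) v + (if v = u then 1 else 0) = deg adj U v := by
  have hvu : v ∈ U := Finset.mem_of_mem_erase hv
  simp only [deg]
  rw [show U.filter (fun w => adj v w) = (insert v₀ (U.erase v₀)).filter (fun w => adj v w)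
      from by rw [Finset.insert_erase hv₀], Finset.filter_insert]
  by_cases h : v = u
  · subst h
    rw [if_pos (hsym _ _ huv), if_pos rfl,
      Finset.card_insert_of_notMem (fun hc => (Finset.mem_erase.1 (Finset.mem_filter.1 hc).1).1 rfl)]
  · have hnadj : ¬ adj v v₀ := fun hc => h (huniq v hvu (hsym _ _ hc))
    rw [if_neg hnadj, if_neg h, add_zero]

lemma degsum_erase (hv₀ : v₀ ∈ U) (hu' : u ∈ U.erase v₀) (hdeg : deg adj U v₀ = 1) :
    (∑ v ∈ U.erase v₀, deg adj (U.erase v₀) v) + 2 = ∑ v ∈ U, deg adj U v := by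
  rw [show (∑ v ∈ U, deg adj U v)
      = ∑ v ∈ insert v₀ (U.erase v₀), deg adj U v from by rw [Finset.insert_erase hv₀],
    Finset.sum_insert (Finset.notMem_erase v₀ U), hdeg]
  rw [← Finset.sum_congr rfl (fun v hv => deg_erase hsym hirr huv huniq hv₀ hv)]
  rw [Finset.sum_add_distrib, Finset.sum_ite_eq' (U.erase v₀) u (fun _ => 1), if_pos hu']
  omega

end Leaf

lemma exists_leaf (hirr : ∀ v, ¬ adj v v) {U : Finset V} (hconn : Conn adj U)
    (hcard : 2 ≤ U.card) (hsum : ∑ v ∈ U, deg adj U v = 2 * (U.card - 1)) :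
    ∃ v₀ ∈ U, deg adj U v₀ = 1 := by
  have hpos : ∀ v ∈ U, 1 ≤ deg adj U v := by
    intro v hv
    obtain ⟨w, hw, hwv⟩ := Finset.exists_mem_ne (by omega : 1 < U.card) v
    rcases reach_exists_adj hirr (hconn v hv w hw) with heq | ⟨z, hz, hzv, hadj⟩
    · exact absurd heq.symm hwv
    · exact Finset.card_pos.2 ⟨z, Finset.mem_filter.2 ⟨hz, hadj⟩⟩
  by_contra hcon
  push_neg at hcon
  have h2 : ∀ v ∈ U, 2 ≤ deg adj U v := by
    intro v hv
    have := hpos v hv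
    have := hcon v hv
    omega
  have hle : 2 * U.card ≤ ∑ v ∈ U, deg adj U v := by
    calc 2 * U.card = ∑ _v ∈ U, 2 := by rw [Finset.sum_const, smul_eq_mul]; ring
    _ ≤ _ := Finset.sum_le_sum h2
  omega
theorem core (hsym : ∀ v w, adj v w → adj w v) (hirr : ∀ v, ¬ adj v v) :
    ∀ (n : ℕ) (U : Finset V), U.card = n → U.Nonempty → Conn adj U →
      (∑ v ∈ U, deg adj U v) = 2 * (U.card - 1) →
      ∀ a : V → ℤ, SS adj a U = ∏ v ∈ U, cc (deg adj U v) (a v) := by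
  intro n
  induction n with
  | zero =>
    intro U hcard hne
    exact absurd (Finset.card_eq_zero.1 hcard) (Finset.nonempty_iff_ne_empty.1 hne)
  | succ m ih =>
    intro U hcard hne hconn hsum a
    rcases Nat.eq_zero_or_pos m with hm | hm
    · -- base case : single vertex
      obtain ⟨v, rfl⟩ := Finset.card_eq_one.1 (by omega : U.card = 1)
      have hdeg : deg adj {v} v = 0 := by
        simp [deg, Finset.filter_singleton, hirr v]
      have hps : ({v} : Finset V).powerset = {∅, {v}} := by
        rw [show ({v} : Finset V) = insert v ∅ from rfl, Finset.powerset_insert,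
          Finset.powerset_empty]
        rfl
      have hdd : dd adj {v} = 0 := by
        rw [dd, Finset.sum_singleton, Finset.sum_singleton, if_neg (hirr v)]
      have hff : ff adj a {v} = 1 + (a v : ℚ) := by
        rw [ff, hdd, Finset.card_singleton, Finset.sum_singleton]
        ring
      have hMMe : MM adj a (∅ : Finset V) = 0 := by
        refine le_antisymm (Finset.sup'_le _ _ ?_) (MM_nonneg a ∅)
        intro J hJ
        have : J = ∅ := Finset.subset_empty.1 (Finset.mem_powerset.1 hJ)
        rw [this, ff_empty]
      have hMMv : MM adj a {v} = 0 ⊔ (1 + (a v : ℚ)) := by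
        refine le_antisymm (Finset.sup'_le _ _ ?_) (sup_le (MM_nonneg a _) ?_)
        · intro J hJ
          rcases Finset.subset_singleton_iff.1 (Finset.mem_powerset.1 hJ) with rfl | rfl
          · rw [ff_empty]; exact le_sup_left
          · rw [hff]; exact le_sup_right
        · rw [← hff]
          exact Finset.le_sup' _ (Finset.mem_powerset.2 subset_rfl)
      have hSS : SS adj a {v} = 0 ⊔ (1 + (a v : ℚ)) := by
        rw [SS, Finset.sum_congr hps (fun _ _ => rfl),
          Finset.sum_pair (Ne.symm (Finset.singleton_ne_empty v))]
        rw [hMMe, hMMv]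
        simp
      rw [hSS, Finset.prod_singleton, hdeg]
      rcases le_or_gt 0 (a v) with h | h
      · rw [cc_zero h, sup_eq_right.2 (by exact_mod_cast (by omega : (0:ℤ) ≤ 1 + a v))]
        ring
      · rw [cc_neg h, sup_eq_left.2 (show 1 + (a v:ℚ) ≤ 0 from by exact_mod_cast (by omega : (1:ℤ) + a v ≤ 0))]
    · -- inductive step
      have hcard2 : 2 ≤ U.card := by omega
      obtain ⟨v₀, hv₀, hdeg⟩ := exists_leaf hirr hconn hcard2 hsum
      obtain ⟨u, hfil⟩ := Finset.card_eq_one.1 hdeg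
      have hu : u ∈ U := (Finset.mem_filter.1 (by rw [hfil]; exact Finset.mem_singleton_self u)).1
      have huv : adj v₀ u := (Finset.mem_filter.1 (by rw [hfil]; exact Finset.mem_singleton_self u)).2
      have huniq : ∀ w ∈ U, adj v₀ w → w = u := by
        intro w hw hadj
        have : w ∈ U.filter (fun w => adj v₀ w) := Finset.mem_filter.2 ⟨hw, hadj⟩
        rw [hfil] at this
        exact Finset.mem_singleton.1 this
      have huv0 : u ≠ v₀ := fun he => hirr v₀ (by rw [he] at huv; exact huv)
      have hu' : u ∈ U.erase v₀ := Finset.mem_erase.2 ⟨huv0, hu⟩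
      have hne' : (U.erase v₀).Nonempty := ⟨u, hu'⟩
      have hcard' : (U.erase v₀).card = m := by
        rw [Finset.card_erase_of_mem hv₀]; omega
      have hconn' := conn_erase hsym hirr huv huniq hconn
      have hsum' : ∑ v ∈ U.erase v₀, deg adj (U.erase v₀) v = 2 * ((U.erase v₀).card - 1) := by
        have h1 := degsum_erase hsym hirr huv huniq hv₀ hu' hdeg
        rw [hcard']
        omega
      have IH1 := ih (U.erase v₀) hcard' hne' hconn' hsum' a
      have IH2 := ih (U.erase v₀) hcard' hne' hconn' hsum' (Function.update a u (a u - 1))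
      rw [SS_erase hsym hirr huv huniq a hv₀ hne']
      -- now compute the product over U
      have hprodU : ∏ v ∈ U, cc (deg adj U v) (a v)
          = cc 1 (a v₀) * ∏ v ∈ U.erase v₀, cc (deg adj U v) (a v) := by
        rw [← Finset.mul_prod_erase U _ hv₀, hdeg]
      have hrest : ∀ v ∈ (U.erase v₀).erase u, cc (deg adj U v) (a v)
          = cc (deg adj (U.erase v₀) v) (a v) := by
        intro v hv
        have hvne : v ≠ u := (Finset.mem_erase.1 hv).1
        have := deg_erase hsym hirr huv huniq hv₀ (Finset.mem_of_mem_erase hv)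
        rw [if_neg hvne, add_zero] at this
        rw [this]
      have hdegu : deg adj U u = deg adj (U.erase v₀) u + 1 := by
        have := deg_erase hsym hirr huv huniq hv₀ hu'
        rw [if_pos rfl] at this
        omega
      have hprodU' : ∏ v ∈ U.erase v₀, cc (deg adj U v) (a v)
          = ∏ v ∈ U.erase v₀, cc (deg adj (U.erase v₀) v) (a v)
            - ∏ v ∈ U.erase v₀, cc (deg adj (U.erase v₀) v) ((Function.update a u (a u - 1)) v) := by
        rw [← Finset.mul_prod_erase (U.erase v₀) (fun v => cc (deg adj U v) (a v)) hu',
          ← Finset.mul_prod_erase (U.erase v₀) (fun v => cc (deg adj (U.erase v₀) v) (a v)) hu',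
          ← Finset.mul_prod_erase (U.erase v₀)
            (fun v => cc (deg adj (U.erase v₀) v) ((Function.update a u (a u - 1)) v)) hu']
        rw [Finset.prod_congr rfl hrest]
        have hupd : ∀ v ∈ (U.erase v₀).erase u,
            cc (deg adj (U.erase v₀) v) ((Function.update a u (a u - 1)) v)
            = cc (deg adj (U.erase v₀) v) (a v) := by
          intro v hv
          rw [Function.update_of_ne (Finset.mem_erase.1 hv).1]
        rw [Finset.prod_congr rfl hupd, hdegu, cc_succ, Function.update_self]
        ring
      rw [hprodU, hprodU', ← IH1, ← IH2]
      rcases le_or_gt 0 (a v₀) with h | h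
      · rw [if_pos h, cc_one h, one_mul]
      · rw [if_neg (not_le.2 h), cc_neg h, zero_mul]

end Graph
section MV
open MvPowerSeries
variable {σ : Type*} [DecidableEq σ]

def ccq (d : ℕ) : ℕ → ℚ := fun k => cc d (k : ℤ)

noncomputable def uni (v : σ) (q : ℕ → ℚ) : MvPowerSeries σ ℚ :=
  fun n => if n = Finsupp.single v (n v) then q (n v) else 0

lemma coeff_uni (v : σ) (q : ℕ → ℚ) (n : σ →₀ ℕ) :
    coeff n (uni v q) = if n = Finsupp.single v (n v) then q (n v) else 0 :=
  rfl

lemma coeff_mul_X (φ : MvPowerSeries σ ℚ) (v : σ) (n : σ →₀ ℕ) :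
    coeff n (φ * X v) = if n v = 0 then 0 else coeff (n - Finsupp.single v 1) φ := by
  rw [MvPowerSeries.coeff_mul]
  by_cases hn : n v = 0
  · rw [if_pos hn]
    apply Finset.sum_eq_zero
    intro p hp
    rw [MvPowerSeries.coeff_X]
    rcases eq_or_ne p.2 (Finsupp.single v 1) with h2 | h2
    · exfalso
      have := Finset.HasAntidiagonal.mem_antidiagonal.1 hp
      have happ : p.1 v + p.2 v = n v := by rw [← Finsupp.add_apply, this]
      rw [h2, Finsupp.single_eq_same] at happ
      omega
    · rw [if_neg h2, mul_zero]
  · rw [if_neg hn]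
    have hmem : (n - Finsupp.single v 1, Finsupp.single v 1) ∈ Finset.HasAntidiagonal.antidiagonal n := by
      rw [Finset.HasAntidiagonal.mem_antidiagonal]
      ext w
      rw [Finsupp.add_apply, Finsupp.tsub_apply]
      rcases eq_or_ne w v with rfl | hw
      · rw [Finsupp.single_eq_same]; omega
      · rw [Finsupp.single_eq_of_ne hw]; omega
    rw [Finset.sum_eq_single_of_mem _ hmem]
    · rw [MvPowerSeries.coeff_X, if_pos rfl, mul_one]
    · intro p hp hne
      rw [MvPowerSeries.coeff_X]
      rcases eq_or_ne p.2 (Finsupp.single v 1) with h2 | h2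
      · exfalso
        apply hne
        have hsum := Finset.HasAntidiagonal.mem_antidiagonal.1 hp
        have : p.1 = n - Finsupp.single v 1 := by
          ext w
          have happ : p.1 w + p.2 w = n w := by rw [← Finsupp.add_apply, hsum]
          rw [Finsupp.tsub_apply]
          rw [h2] at happ
          rcases eq_or_ne w v with rfl | hw
          · rw [Finsupp.single_eq_same] at happ
            rw [Finsupp.single_eq_same]
            omega
          · rw [Finsupp.single_eq_of_ne hw] at happ
            rw [Finsupp.single_eq_of_ne hw]
            omega
        rw [Prod.ext_iff]
        exact ⟨this, h2⟩
      · rw [if_neg h2, mul_zero]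

lemma uni_succ (v : σ) (d : ℕ) :
    uni v (ccq (d+1)) = uni v (ccq d) * (1 - X v) := by
  apply MvPowerSeries.ext
  intro n
  have hrhs : uni v (ccq d) * (1 - X v) = uni v (ccq d) - uni v (ccq d) * X v := by ring
  rw [hrhs, map_sub, coeff_mul_X, coeff_uni, coeff_uni]
  by_cases h : n = Finsupp.single v (n v)
  · rw [if_pos h, if_pos h]
    rcases Nat.eq_zero_or_pos (n v) with h0 | h0
    · rw [if_pos h0, sub_zero, h0]
      show cc (d+1) (((0:ℕ)):ℤ) = cc d (((0:ℕ)):ℤ)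
      rw [Nat.cast_zero, cc_succ, cc_neg (show (0:ℤ) - 1 < 0 by norm_num), sub_zero]
    · obtain ⟨k, hk⟩ : ∃ k, n v = k + 1 := ⟨n v - 1, by omega⟩
      rw [if_neg (by omega)]
      have hsub : n - Finsupp.single v 1 = Finsupp.single v k := by
        ext w
        rw [Finsupp.tsub_apply]
        rcases eq_or_ne w v with rfl | hw
        · rw [Finsupp.single_eq_same, Finsupp.single_eq_same, hk]
          omega
        · rw [Finsupp.single_eq_of_ne hw, Finsupp.single_eq_of_ne hw]
          conv_lhs => rw [h]
          rw [Finsupp.single_eq_of_ne hw]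
          omega
      rw [hsub, coeff_uni, Finsupp.single_eq_same, if_pos rfl, hk]
      show cc (d+1) ((((k+1:ℕ))):ℤ) = cc d (((k+1:ℕ)):ℤ) - cc d ((k:ℕ):ℤ)
      rw [cc_succ]
      norm_num
  · rw [if_neg h, if_neg h]
    rcases Nat.eq_zero_or_pos (n v) with h0 | h0
    · rw [if_pos h0, sub_zero]
    · rw [if_neg (by omega), coeff_uni]
      have hcond : ¬ (n - Finsupp.single v 1
          = Finsupp.single v ((n - Finsupp.single v 1 : σ →₀ ℕ) v)) := by
        intro hc
        apply h
        ext w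
        rcases eq_or_ne w v with rfl | hw
        · rw [Finsupp.single_eq_same]
        · rw [Finsupp.single_eq_of_ne hw]
          have h3 := congrArg (fun f : σ →₀ ℕ => f w) hc
          simp only [Finsupp.tsub_apply] at h3
          rw [Finsupp.single_eq_of_ne hw, Finsupp.single_eq_of_ne hw] at h3
          omega
      rw [if_neg hcond, sub_zero]

lemma uni_two (v : σ) : uni v (ccq 2) = 1 := by
  apply MvPowerSeries.ext
  intro n
  rw [coeff_uni, MvPowerSeries.coeff_one]
  by_cases h : n = Finsupp.single v (n v)
  · rw [if_pos h]
    by_cases h0 : n v = 0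
    · rw [if_pos (by rw [h, h0, Finsupp.single_zero]), h0]
      show cc 2 (((0:ℕ)):ℤ) = 1
      rw [Nat.cast_zero, cc_two, if_pos rfl]
    · rw [if_neg (fun hc : n = 0 => h0 (by rw [hc]; rfl))]
      show cc 2 (((n v:ℕ)):ℤ) = 0
      rw [cc_two, if_neg (by exact_mod_cast h0)]
  · rw [if_neg h, if_neg (fun hc : n = 0 => h (by rw [hc]; simp))]

lemma uni_pow (v : σ) (d : ℕ) :
    uni v (ccq d) * (1 - X v)^2 = (1 - X v)^d := by
  induction d with
  | zero =>
    rw [pow_two, ← mul_assoc, ← uni_succ, ← uni_succ, uni_two, pow_zero]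
  | succ d ihd =>
    rw [uni_succ, show (1 - X (R := ℚ) v)^(d+1) = (1 - X v)^d * (1 - X v) from pow_succ _ _,
      ← ihd]
    ring

lemma coeff_prod_uni [Fintype σ] (q : σ → ℕ → ℚ) (n : σ →₀ ℕ) :
    coeff n (∏ v, uni v (q v)) = ∏ v, q v (n v) := by
  rw [MvPowerSeries.coeff_prod]
  set l₀ : σ →₀ (σ →₀ ℕ) := Finsupp.equivFunOnFinite.symm (fun v => Finsupp.single v (n v))
    with hl₀
  have hl₀v : ∀ v, l₀ v = Finsupp.single v (n v) := fun v => by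
    rw [hl₀, Finsupp.equivFunOnFinite_symm_apply_apply]
  have hcollapse : ∀ (g : σ → σ →₀ ℕ), (∀ v, g v = Finsupp.single v ((g v) v)) →
      ∀ w, (∑ v, g v) w = (g w) w := by
    intro g hg w
    rw [Finsupp.finset_sum_apply]
    rw [Finset.sum_congr rfl (fun v _ => by
      rw [hg v, Finsupp.single_apply])]
    rw [Finset.sum_ite_eq' Finset.univ w (fun v => (g v) v), if_pos (Finset.mem_univ w)]
  have hsingle₀ : ∀ v, l₀ v = Finsupp.single v ((l₀ v : σ →₀ ℕ) v) := by
    intro v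
    rw [hl₀v v, Finsupp.single_eq_same]
  have hmem : l₀ ∈ Finset.univ.finsuppAntidiag n := by
    rw [Finset.mem_finsuppAntidiag]
    refine ⟨?_, Finset.subset_univ _⟩
    ext w
    rw [hcollapse (fun v => l₀ v) hsingle₀ w, hl₀v w, Finsupp.single_eq_same]
  rw [Finset.sum_eq_single_of_mem l₀ hmem]
  · apply Finset.prod_congr rfl
    intro v _
    rw [hl₀v v, coeff_uni, Finsupp.single_eq_same, if_pos rfl]
  · intro l hl hne
    by_contra hc
    have hne0 : ∀ v ∈ Finset.univ, coeff (l v) (uni v (q v)) ≠ 0 :=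
      Finset.prod_ne_zero_iff.1 hc
    have hsingle : ∀ v, l v = Finsupp.single v ((l v : σ →₀ ℕ) v) := by
      intro v
      have h1 := hne0 v (Finset.mem_univ v)
      rw [coeff_uni] at h1
      by_contra hcc
      rw [if_neg hcc] at h1
      exact h1 rfl
    apply hne
    have hsum := (Finset.mem_finsuppAntidiag.1 hl).1
    have hval : ∀ v, (l v : σ →₀ ℕ) v = n v := by
      intro v
      rw [← hsum, hcollapse (fun u => l u) hsingle v]
    apply Finsupp.ext
    intro v
    rw [hsingle v, hl₀v v, hval v]

end MV

section Pairing
variable {s : ℕ}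

noncomputable def PB (M : Matrix (Fin s) (Fin s) ℤ) :
    (Fin s → ℚ) →ₗ[ℚ] (Fin s → ℚ) →ₗ[ℚ] ℚ :=
  Matrix.toLinearMap₂' ℚ (intMatQ M)

lemma PB_apply (M : Matrix (Fin s) (Fin s) ℤ) (x y : Fin s → ℚ) :
    PB M x y = ∑ v, ∑ w, x v • y w • (intMatQ M) v w :=
  Matrix.toLinearMap₂'_apply _ _ _

lemma pairing_eq_PB (M : Matrix (Fin s) (Fin s) ℤ) (x y : Fin s → ℚ) :
    pairing M x y = PB M x y := by
  rw [pairing, PB_apply]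
  rw [dotProduct, Finset.sum_congr rfl (fun v _ => by
    rw [Matrix.mulVec, dotProduct, Finset.mul_sum] :
    ∀ v ∈ Finset.univ, x v * (intMatQ M).mulVec y v
      = ∑ w, x v * ((intMatQ M) v w * y w))]
  apply Finset.sum_congr rfl
  intro v _
  apply Finset.sum_congr rfl
  intro w _
  simp only [smul_eq_mul, intMatQ, Matrix.map_apply]
  ring

lemma PB_base (M : Matrix (Fin s) (Fin s) ℤ) (u v : Fin s) :
    PB M (baseE u) (baseE v) = (M u v : ℚ) := by
  rw [PB_apply]
  rw [Finset.sum_eq_single u]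
  · rw [Finset.sum_eq_single v]
    · simp [baseE, intMatQ]
    · intro w _ hw
      simp [baseE, Pi.single_apply, hw]
    · simp
  · intro w _ hw
    simp [baseE, Pi.single_apply, hw]
  · simp

lemma PB_symm {M : Matrix (Fin s) (Fin s) ℤ} (hM : M.IsSymm) (x y : Fin s → ℚ) :
    PB M x y = PB M y x := by
  rw [PB_apply, PB_apply]
  rw [Finset.sum_comm]
  apply Finset.sum_congr rfl
  intro v _
  apply Finset.sum_congr rfl
  intro w _
  simp only [smul_eq_mul, intMatQ, Matrix.map_apply]
  rw [hM.apply v w]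
  ring

lemma PB_quad {M : Matrix (Fin s) (Fin s) ℤ} (hM : M.IsSymm) (x y : Fin s → ℚ) :
    PB M (x + (y + y)) (x + (y + y)) = PB M x x + 4 * PB M x y + 4 * PB M y y := by
  simp only [map_add, LinearMap.add_apply]
  rw [PB_symm hM y x]
  ring

end Pairing
end ZetaAux

open ZetaAux in
/-- Theorem 2.11: the zeta function `Z(t) = Π_v (1-t^{E_v^*})^{δ_v-2}` equals the
weighted-cube counting series `Σ_{k∈Char} Σ_{I'⊆V} (-1)^{|I'|+1} w((k,I')) t^{(k-K)/2}`.
Writing exponents `(k-K)/2 = Σ_v a_v E_v^*` in the antidual basis, and realizing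
`Z` as the multivariable power series with `Z·Π(1-x_v)² = Π(1-x_v)^{δ_v}` in the
variables `x_v = t^{E_v^*}`, the identity reads coefficientwise as below. -/
theorem zeta_equals_weighted_cube_count
    (s : ℕ) (hs : 1 ≤ s) (I : Matrix (Fin s) (Fin s) ℤ)
    (htree : IsPlumbingTree I)
    (Estar : Fin s → Fin s → ℚ) (hE : IsAntidual I Estar)
    (K : Fin s → ℚ) (hK : IsCanonical I K)
    (Z : MvPowerSeries (Fin s) ℚ)
    (hZ : Z * ∏ v, (1 - MvPowerSeries.X v) ^ 2
            = ∏ v, (1 - MvPowerSeries.X v) ^ (valency I v)) :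
    ∀ a : Fin s → ℤ,
      cubeSum I (K + 2 • ∑ v, (a v : ℚ) • Estar v)
        = if ∀ v, 0 ≤ a v then
            MvPowerSeries.coeff
              (Finsupp.equivFunOnFinite.symm fun v => (a v).toNat) Z
          else 0 := by
  classical
  obtain ⟨⟨hsymm, hneg, hoff, hconn⟩, hval⟩ := htree
  intro a
  haveI : Nonempty (Fin s) := ⟨⟨0, by omega⟩⟩
  set adj : Fin s → Fin s → Prop := fun v w => v ≠ w ∧ I v w = 1 with hadj
  have hadj_symm : ∀ v w, adj v w → adj w v := by
    rintro v w ⟨hne, h1⟩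
    exact ⟨hne.symm, by rw [hsymm.apply v w]; exact h1⟩
  have hadj_irr : ∀ v, ¬ adj v v := by rintro v ⟨h, _⟩; exact h rfl
  have hdeg_val : ∀ v, ZetaAux.deg adj Finset.univ v = valency I v := by
    intro v
    rw [ZetaAux.deg, valency]
    congr 1
    ext w
    simp only [Finset.mem_filter, hadj]
    tauto
  have hConn : ZetaAux.Conn adj Finset.univ := by
    intro x hx y hy
    clear hx hy
    obtain ⟨p⟩ := hconn.preconnected x y
    induction p with
    | nil => exact ZetaAux.ReachIn.refl (Finset.mem_univ _)
    | cons h p ih =>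
      rename_i x' v' w'
      refine ZetaAux.reach_head ?_ (Finset.mem_univ _) ih
      rw [SimpleGraph.fromRel_adj] at h
      obtain ⟨hne, h1 | h1⟩ := h
      · exact ⟨hne, h1⟩
      · exact ⟨hne, by rw [hsymm.apply v' x']; exact h1⟩
  have hsum : ∑ v ∈ (Finset.univ : Finset (Fin s)), ZetaAux.deg adj Finset.univ v
      = 2 * ((Finset.univ : Finset (Fin s)).card - 1) := by
    rw [Finset.sum_congr rfl (fun v _ => hdeg_val v), Finset.card_univ, Fintype.card_fin]
    exact hval
  set T : Fin s → ℚ := ∑ v, (a v : ℚ) • Estar v with hT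
  set k : Fin s → ℚ := K + 2 • T with hk
  -- basic pairing values
  have hPK : ∀ w, ZetaAux.PB I K (baseE w) = -2 - (I w w : ℚ) := by
    intro w
    have h1 := hK w
    rw [pairing_eq_PB, map_add, LinearMap.add_apply, ZetaAux.PB_base] at h1
    linarith
  have hPT : ∀ w, ZetaAux.PB I T (baseE w) = -(a w : ℚ) := by
    intro w
    rw [hT, map_sum, LinearMap.sum_apply]
    rw [Finset.sum_congr rfl (fun v _ => by
      rw [map_smul, LinearMap.smul_apply, smul_eq_mul, ← pairing_eq_PB, hE v w] :
        ∀ v ∈ Finset.univ, ZetaAux.PB I ((a v : ℚ) • Estar v) (baseE w)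
          = (a v : ℚ) * (if v = w then (-1:ℚ) else 0))]
    rw [Finset.sum_congr rfl (fun v _ => by
      rcases eq_or_ne v w with rfl | hv
      · rw [if_pos rfl, if_pos rfl]; ring
      · rw [if_neg hv, if_neg hv, mul_zero] :
        ∀ v ∈ Finset.univ, (a v : ℚ) * (if v = w then (-1:ℚ) else 0)
          = (if v = w then -(a v : ℚ) else 0))]
    rw [Finset.sum_ite_eq' Finset.univ w (fun v => -(a v : ℚ)), if_pos (Finset.mem_univ w)]
  have hPk_base : ∀ w, ZetaAux.PB I k (baseE w)
      = -2 - (I w w : ℚ) - 2*(a w : ℚ) := by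
    intro w
    rw [hk, two_smul ℕ T, map_add, map_add, LinearMap.add_apply, LinearMap.add_apply,
      hPK, hPT]
    ring
  -- the key formula for wfun on cubes
  have key_w : ∀ J : Finset (Fin s),
      wfun I (k + 2 • ∑ j ∈ J, baseE j) = ZetaAux.ff adj a J + wfun I k := by
    intro J
    set E : Fin s → ℚ := ∑ j ∈ J, baseE j with hEdef
    have hPkE : ZetaAux.PB I k E = ∑ w ∈ J, (-2 - (I w w : ℚ) - 2*(a w : ℚ)) := by
      rw [hEdef, map_sum]
      exact Finset.sum_congr rfl (fun w _ => hPk_base w)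
    have hPEE : ZetaAux.PB I E E = (∑ v ∈ J, (I v v : ℚ)) + ZetaAux.dd adj J := by
      have h0 : ZetaAux.PB I E E = ∑ v ∈ J, ∑ w ∈ J, (I v w : ℚ) := by
        rw [hEdef, map_sum (ZetaAux.PB I) (fun j => baseE j) J, LinearMap.sum_apply]
        refine Finset.sum_congr rfl ?_
        intro v _
        rw [map_sum ((ZetaAux.PB I) (baseE v)) (fun j => baseE j) J]
        refine Finset.sum_congr rfl ?_
        intro w _
        exact ZetaAux.PB_base I v w
      rw [h0, ZetaAux.dd, ← Finset.sum_add_distrib]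
      apply Finset.sum_congr rfl
      intro v hv
      have hsplit : ∀ w ∈ J, (I v w : ℚ)
          = (if w = v then (I v v : ℚ) else 0) + (if adj v w then 1 else 0) := by
        intro w _
        rcases eq_or_ne w v with rfl | hne
        · rw [if_pos rfl, if_neg (hadj_irr w)]; ring
        · rw [if_neg hne]
          rcases hoff v w (Ne.symm hne) with h0' | h1
          · rw [if_neg (fun hc => by rw [hadj] at hc; omega), h0']
            norm_num
          · rw [if_pos ⟨Ne.symm hne, h1⟩, h1]
            norm_num
      rw [Finset.sum_congr rfl hsplit, Finset.sum_add_distrib,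
        Finset.sum_ite_eq' J v (fun _ => (I v v : ℚ)), if_pos hv]
      congr
      funext w
      congr
    have hquad : ZetaAux.PB I (k + 2 • E) (k + 2 • E)
        = ZetaAux.PB I k k + 4 * ZetaAux.PB I k E + 4 * ZetaAux.PB I E E := by
      rw [two_smul ℕ E]
      exact ZetaAux.PB_quad hsymm k E
    have e1 : ∑ w ∈ J, ((-2:ℚ) - (I w w : ℚ) - 2*(a w : ℚ))
        = -2*(J.card:ℚ) - (∑ w ∈ J, (I w w : ℚ)) - 2*(∑ w ∈ J, (a w : ℚ)) := by
      rw [Finset.sum_sub_distrib, Finset.sum_sub_distrib, Finset.sum_const,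
        nsmul_eq_mul, ← Finset.mul_sum]
      ring
    rw [wfun, wfun, pairing_eq_PB, pairing_eq_PB, hquad, hPkE, hPEE, e1, ZetaAux.ff]
    ring
  -- cubeW in terms of MM
  have hcubeW : ∀ I' : Finset (Fin s),
      cubeW I k I' = ZetaAux.MM adj a I' + wfun I k := by
    intro I'
    rw [cubeW, Finset.sup'_congr (Finset.powerset_nonempty I') rfl (fun J _ => key_w J)]
    rw [ZetaAux.sup'_add_const (Finset.powerset_nonempty I') (ZetaAux.ff adj a) (wfun I k)]
    rfl
  -- cubeSum = SS
  have hcubeSum : cubeSum I k = ZetaAux.SS adj a Finset.univ := by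
    rw [cubeSum, Finset.sum_congr rfl (fun I' _ => by
      rw [hcubeW I', mul_add] :
      ∀ I' ∈ (Finset.univ : Finset (Fin s)).powerset, (-1:ℚ)^(I'.card+1) * cubeW I k I'
        = (-1:ℚ)^(I'.card+1) * ZetaAux.MM adj a I'
          + (-1:ℚ)^(I'.card+1) * wfun I k)]
    rw [Finset.sum_add_distrib]
    have hzero : ∑ I' ∈ (Finset.univ : Finset (Fin s)).powerset,
        (-1:ℚ)^(I'.card+1) * wfun I k = 0 := by
      rw [← Finset.sum_mul]
      rw [Finset.sum_congr rfl (fun I' _ => pow_succ (-1:ℚ) I'.card :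
        ∀ I' ∈ (Finset.univ : Finset (Fin s)).powerset,
          (-1:ℚ)^(I'.card+1) = (-1:ℚ)^I'.card * (-1))]
      rw [← Finset.sum_mul, ZetaAux.sum_pow_neg_one_q Finset.univ_nonempty]
      ring
    rw [hzero, add_zero]
    rfl
  have hcore := ZetaAux.core hadj_symm hadj_irr (Finset.univ.card) Finset.univ rfl
    Finset.univ_nonempty hConn hsum a
  have hprod : cubeSum I k = ∏ v, ZetaAux.cc (valency I v) (a v) := by
    rw [hcubeSum, hcore]
    exact Finset.prod_congr rfl (fun v _ => by rw [hdeg_val v])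
  -- the power series side
  set P : MvPowerSeries (Fin s) ℚ := ∏ v, (1 - MvPowerSeries.X v) ^ 2 with hP
  set Q : MvPowerSeries (Fin s) ℚ := ∏ v, (1 - MvPowerSeries.X v) ^ (valency I v) with hQ
  set W : MvPowerSeries (Fin s) ℚ := ∏ v, ZetaAux.uni v (ZetaAux.ccq (valency I v))
    with hW
  have hWP : W * P = Q := by
    rw [hW, hP, hQ, ← Finset.prod_mul_distrib]
    exact Finset.prod_congr rfl (fun v _ => ZetaAux.uni_pow v (valency I v))
  have hPunit : MvPowerSeries.constantCoeff P = ((1 : ℚˣ) : ℚ) := by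
    rw [hP, map_prod]
    rw [Finset.prod_congr rfl (fun v _ => by
      rw [map_pow, map_sub, map_one, MvPowerSeries.constantCoeff_X, sub_zero, one_pow] :
      ∀ v ∈ (Finset.univ : Finset (Fin s)), MvPowerSeries.constantCoeff
        ((1 - MvPowerSeries.X (R := ℚ) v) ^ 2) = 1)]
    simp
  have hZW : Z = W := by
    have hinv := MvPowerSeries.mul_invOfUnit P 1 hPunit
    calc Z = Z * (P * P.invOfUnit 1) := by rw [hinv, mul_one]
    _ = (Z * P) * P.invOfUnit 1 := by ring
    _ = (W * P) * P.invOfUnit 1 := by rw [hZ, hWP]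
    _ = W * (P * P.invOfUnit 1) := by ring
    _ = W := by rw [hinv, mul_one]
  by_cases hpos : ∀ v, 0 ≤ a v
  · rw [if_pos hpos, hprod, hZW, hW, ZetaAux.coeff_prod_uni]
    apply Finset.prod_congr rfl
    intro v _
    rw [Finsupp.equivFunOnFinite_symm_apply_apply]
    rw [show ZetaAux.ccq (valency I v) ((a v).toNat)
        = ZetaAux.cc (valency I v) (((a v).toNat : ℕ) : ℤ) from rfl]
    rw [Int.toNat_of_nonneg (hpos v)]
  · rw [if_neg hpos, hprod]
    push_neg at hpos
    obtain ⟨v, hv⟩ := hpos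
    exact Finset.prod_eq_zero (Finset.mem_univ v) (ZetaAux.cc_neg hv)
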